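/- Let V be a finite-dimensional real inner product space and let p ≥ 3. Define E : V∖{0} → ℝ by E(x) = −(1/(p−2))·‖x‖^{2−p}. Then for every x ∈ V with x ≠ 0 and every orthonormal p-tuple (e₁,…,e_p) in V, Σ_{j=1}^p D²E(x)(e_j,e_j) ≥ 0, with equality if and only if x ∈ span{e₁,…,e_p}. In particular, E is φ-plurisubharmonic on V∖{0} for every alternating p-form φ of comass one on V. (Proposition 1.7) -/

import Mathlib

open scoped RealInnerProductSpace

noncomputable section

variable {V : Type*} [NormedAddCommGroup V] [InnerProductSpace ℝ V] [FiniteDimensional ℝ V]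

/-- The fundamental function `E(x) = −(1/(p−2))·‖x‖^{2−p}` (for `p ≥ 3`). -/
def fundE (p : ℕ) : V → ℝ := fun x => -(1 / ((p : ℝ) - 2)) * ‖x‖ ^ ((2 : ℝ) - (p : ℝ))

set_option linter.unusedSectionVars false

def innerSLR : V →L[ℝ] V →L[ℝ] ℝ :=
  LinearMap.mkContinuous
    { toFun := fun v => innerSL ℝ v
      map_add' := fun v w => by ext u; simp [inner_add_left]
      map_smul' := fun c v => by ext u; simp [inner_smul_left] }
    1 (fun v => by simp [innerSL_apply_norm])

@[simp] lemma innerSLR_apply (v w : V) : (innerSLR v) w = ⟪v, w⟫ := rfl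

lemma fundE_eq (p : ℕ) : (fundE p : V → ℝ)
    = fun y => -(1 / ((p : ℝ) - 2)) * ((‖y‖ ^ 2 : ℝ) ^ (((2:ℝ) - p)/2)) := by
  funext y
  unfold fundE
  have h : (‖y‖ ^ 2 : ℝ) ^ (((2:ℝ) - p)/2) = ‖y‖ ^ ((2:ℝ) - p) := by
    rw [← Real.rpow_natCast ‖y‖ 2, ← Real.rpow_mul (norm_nonneg y)]
    congr 1; push_cast; ring
  rw [h]

lemma hasFDerivAt_fundE {p : ℕ} (hp : 3 ≤ p) {x : V} (hx : x ≠ 0) :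
    HasFDerivAt (fundE p) (((‖x‖ ^ 2 : ℝ) ^ (-(p:ℝ)/2)) • innerSLR x) x := by
  have h0 : (‖x‖ ^ 2 : ℝ) ≠ 0 := pow_ne_zero 2 (norm_ne_zero_iff.mpr hx)
  have hp2 : (p : ℝ) - 2 ≠ 0 := by
    have : (3:ℝ) ≤ p := by exact_mod_cast hp
    nlinarith
  have hq : HasFDerivAt (fun y : V => ‖y‖ ^ 2) ((2:ℕ) • innerSLR x) x :=
    (hasStrictFDerivAt_norm_sq x).hasFDerivAt
  have hr := hq.rpow_const (p := ((2:ℝ) - p)/2) (Or.inl h0)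
  have hE := hr.const_mul (-(1 / ((p : ℝ) - 2)))
  rw [fundE_eq]
  convert hE using 1
  · rfl
  · rfl
  have he : ((2:ℝ) - p)/2 - 1 = -(p:ℝ)/2 := by ring
  ext w
  simp only [ContinuousLinearMap.smul_apply, innerSLR_apply, smul_eq_mul,
    ContinuousLinearMap.coe_smul', Pi.smul_apply, he]
  field_simp
  ring

lemma iteratedFDeriv_two_fundE {p : ℕ} (hp : 3 ≤ p) {x : V} (hx : x ≠ 0) (v w : V) :
    iteratedFDeriv ℝ 2 (fundE p) x ![v, w]
      = (‖x‖ ^ 2 : ℝ) ^ (-(p:ℝ)/2) * ⟪v, w⟫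
        - (p:ℝ) * (‖x‖ ^ 2 : ℝ) ^ (-(p:ℝ)/2 - 1) * (⟪x, v⟫ * ⟪x, w⟫) := by
  have h0 : (‖x‖ ^ 2 : ℝ) ≠ 0 := pow_ne_zero 2 (norm_ne_zero_iff.mpr hx)
  rw [iteratedFDeriv_two_apply]
  have hev : fderiv ℝ (fundE p)
      =ᶠ[nhds x] (fun y : V => ((‖y‖ ^ 2 : ℝ) ^ (-(p:ℝ)/2)) • innerSLR y) := by
    filter_upwards [IsOpen.mem_nhds isOpen_compl_singleton hx] with y hy
    exact (hasFDerivAt_fundE hp hy).fderiv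
  rw [hev.fderiv_eq]
  have hc : HasFDerivAt (fun y : V => (‖y‖ ^ 2 : ℝ) ^ (-(p:ℝ)/2))
      (((-(p:ℝ)/2) * (‖x‖ ^ 2 : ℝ) ^ (-(p:ℝ)/2 - 1)) • ((2:ℕ) • innerSLR x)) x :=
    ((hasStrictFDerivAt_norm_sq x).hasFDerivAt).rpow_const (Or.inl h0)
  have hf : HasFDerivAt (fun y : V => innerSLR y) innerSLR x := innerSLR.hasFDerivAt
  rw [HasFDerivAt.fderiv (f := fun y : V => ((‖y‖ ^ 2 : ℝ) ^ (-(p:ℝ)/2)) • innerSLR y) (hc.smul hf)]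
  simp only [ContinuousLinearMap.add_apply, ContinuousLinearMap.smul_apply,
    ContinuousLinearMap.smulRight_apply, innerSLR_apply, smul_eq_mul,
    ContinuousLinearMap.coe_smul', Pi.smul_apply, Matrix.cons_val_zero,
    Matrix.cons_val_one, Matrix.head_cons]
  ring

lemma bessel_with_eq {ι : Type*} [Fintype ι] {e : ι → V} (he : Orthonormal ℝ e) (x : V) :
    ∑ j, ⟪x, e j⟫ ^ 2 ≤ ‖x‖ ^ 2 ∧
      (∑ j, ⟪x, e j⟫ ^ 2 = ‖x‖ ^ 2 ↔ x ∈ Submodule.span ℝ (Set.range e)) := by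
  classical
  set y : V := ∑ j, ⟪x, e j⟫ • e j with hy
  have hyi : ∀ i, ⟪y, e i⟫ = ⟪x, e i⟫ := by
    intro i
    rw [hy, sum_inner]
    simp [inner_smul_left, orthonormal_iff_ite.mp he]
  have hyy : ⟪y, y⟫ = ∑ j, ⟪x, e j⟫ ^ 2 := by
    rw [hy, inner_sum]
    simp only [inner_smul_right]
    refine Finset.sum_congr rfl fun j _ => ?_
    rw [← hy, hyi j]; ring
  have hxy : ⟪x, y⟫ = ∑ j, ⟪x, e j⟫ ^ 2 := by
    rw [hy, inner_sum]
    simp [inner_smul_right, sq]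
  have hkey : ‖x - y‖ ^ 2 = ‖x‖ ^ 2 - ∑ j, ⟪x, e j⟫ ^ 2 := by
    have h1 := @norm_sub_sq_real V _ _ x y
    have h2 : ⟪y, y⟫ = ‖y‖ ^ 2 := real_inner_self_eq_norm_sq y
    linarith [h1, hxy, hyy]
  have hymem : y ∈ Submodule.span ℝ (Set.range e) :=
    Submodule.sum_mem _ fun j _ =>
      Submodule.smul_mem _ _ (Submodule.subset_span (Set.mem_range_self j))
  constructor
  · nlinarith [sq_nonneg ‖x - y‖]
  constructor
  · intro h
    have hxeqy : x = y := by
      have h3 : ‖x - y‖ ^ 2 = 0 := by linarith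
      have := pow_eq_zero_iff (n := 2) (by norm_num) |>.mp h3
      have := norm_eq_zero.mp this
      exact sub_eq_zero.mp this
    exact hxeqy ▸ hymem
  · intro hmem
    have hperp : ∀ z ∈ Submodule.span ℝ (Set.range e), ⟪x - y, z⟫ = 0 := by
      intro z hz
      induction hz using Submodule.span_induction with
      | mem z hz =>
        obtain ⟨i, rfl⟩ := hz
        simp [inner_sub_left, hyi]
      | zero => simp
      | add _ _ _ _ h1 h2 => simp [inner_add_right, h1, h2]
      | smul _ _ _ h1 => simp [inner_smul_right, h1]
    have hxeqy : x - y = 0 :=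
      inner_self_eq_zero.mp (hperp _ (Submodule.sub_mem _ hmem hymem))
    have : ‖x - y‖ ^ 2 = 0 := by rw [hxeqy]; simp
    linarith

lemma sum_iteratedFDeriv_two_fundE {p : ℕ} (hp : 3 ≤ p) {x : V} (hx : x ≠ 0)
    {e : Fin p → V} (he : Orthonormal ℝ e) :
    ∑ j, iteratedFDeriv ℝ 2 (fundE p) x ![e j, e j]
      = (p : ℝ) * (‖x‖ ^ 2 : ℝ) ^ (-(p:ℝ)/2 - 1) * ((‖x‖ ^ 2 : ℝ) - ∑ j, ⟪x, e j⟫ ^ 2) := by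
  have h0 : (‖x‖ ^ 2 : ℝ) ≠ 0 := pow_ne_zero 2 (norm_ne_zero_iff.mpr hx)
  have hn : ∀ j, ⟪e j, e j⟫ = (1 : ℝ) := fun j => by
    rw [real_inner_self_eq_norm_sq, he.1 j]; norm_num
  have hta : (‖x‖ ^ 2 : ℝ) ^ (-(p:ℝ)/2)
      = (‖x‖ ^ 2 : ℝ) ^ (-(p:ℝ)/2 - 1) * (‖x‖ ^ 2 : ℝ) := by
    conv_lhs => rw [show -(p:ℝ)/2 = (-(p:ℝ)/2 - 1) + 1 by ring, Real.rpow_add_one h0]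
  calc ∑ j, iteratedFDeriv ℝ 2 (fundE p) x ![e j, e j]
      = ∑ j : Fin p, ((‖x‖ ^ 2 : ℝ) ^ (-(p:ℝ)/2)
          - (p:ℝ) * (‖x‖ ^ 2 : ℝ) ^ (-(p:ℝ)/2 - 1) * ⟪x, e j⟫ ^ 2) :=
        Finset.sum_congr rfl fun j _ => by
          rw [iteratedFDeriv_two_fundE hp hx, hn j]; ring
    _ = _ := by
        rw [Finset.sum_sub_distrib, Finset.sum_const, ← Finset.mul_sum,
          Finset.card_univ, Fintype.card_fin, nsmul_eq_mul, hta]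
        ring

/-- Proposition 1.7: for `p ≥ 3` and `E(x) = −(1/(p−2))·‖x‖^{2−p}`, for every `x ≠ 0` and
every orthonormal `p`-tuple `(e₁,…,e_p)` one has `Σ_j D²E(x)(e_j,e_j) ≥ 0`, with equality
if and only if `x ∈ span{e₁,…,e_p}`.  In particular, `E` is `φ`-plurisubharmonic on
`V∖{0}` for every alternating `p`-form `φ` of comass one. -/
theorem fundE_psh {p : ℕ} (hp : 3 ≤ p) :
    (∀ x : V, x ≠ 0 → ∀ e : Fin p → V, Orthonormal ℝ e →
      0 ≤ ∑ j, iteratedFDeriv ℝ 2 (fundE p) x ![e j, e j] ∧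
        ((∑ j, iteratedFDeriv ℝ 2 (fundE p) x ![e j, e j]) = 0 ↔
          x ∈ Submodule.span ℝ (Set.range e))) ∧
    ∀ φ : V [⋀^Fin p]→ₗ[ℝ] ℝ, (∀ e : Fin p → V, Orthonormal ℝ e → φ e ≤ 1) →
      ∀ x : V, x ≠ 0 → ∀ e : Fin p → V, Orthonormal ℝ e → φ e = 1 →
        0 ≤ ∑ j, iteratedFDeriv ℝ 2 (fundE p) x ![e j, e j] := by
  have main : ∀ x : V, x ≠ 0 → ∀ e : Fin p → V, Orthonormal ℝ e →
      0 ≤ ∑ j, iteratedFDeriv ℝ 2 (fundE p) x ![e j, e j] ∧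
        ((∑ j, iteratedFDeriv ℝ 2 (fundE p) x ![e j, e j]) = 0 ↔
          x ∈ Submodule.span ℝ (Set.range e)) := by
    intro x hx e he
    have ht : (0:ℝ) < ‖x‖ ^ 2 := pow_pos (norm_pos_iff.mpr hx) 2
    have hC : (0:ℝ) < (p : ℝ) * (‖x‖ ^ 2 : ℝ) ^ (-(p:ℝ)/2 - 1) := by
      have hp0 : (0:ℝ) < p := by exact_mod_cast Nat.lt_of_lt_of_le (by norm_num) hp
      exact mul_pos hp0 (Real.rpow_pos_of_pos ht _)
    have hb := bessel_with_eq he x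
    rw [sum_iteratedFDeriv_two_fundE hp hx he]
    constructor
    · exact mul_nonneg hC.le (by linarith [hb.1])
    · constructor
      · intro h
        rcases mul_eq_zero.mp h with h | h
        · exact absurd h hC.ne'
        · exact hb.2.mp (by linarith)
      · intro h
        have := hb.2.mpr h
        rw [this]; ring
  exact ⟨main, fun φ _ x hx e he _ => (main x hx e he).1⟩
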